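/- Let X ⊆ 2^ω be a Bernstein set in the Cantor space 2^ω, i.e., for every subset P of 2^ω that is nonempty, completely metrizable in the subspace topology, and has no isolated points, both X ∩ P and P \ X are nonempty. Then the classical Banach–Mazur game BM(X), played in X with the subspace topology, is undetermined: neither Odd nor Eve has a winning strategy in BM(X). -/

import Mathlib

/-! The classical Banach–Mazur game on a topological space. -/

section BMtop

variable {X : Type*} [TopologicalSpace X]

/-- A play of the Banach–Mazur game: a decreasing sequence of nonempty open sets. -/
def TopPlay (U : ℕ → Set X) : Prop :=
  (∀ n, IsOpen (U n)) ∧ (∀ n, (U n).Nonempty) ∧ ∀ n, U (n + 1) ⊆ U n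

/-- A finite decreasing sequence of nonempty open sets (a partial play). -/
def TopPartialPlay {m : ℕ} (v : Fin m → Set X) : Prop :=
  (∀ i, IsOpen (v i)) ∧ (∀ i, (v i).Nonempty) ∧ ∀ i j : Fin m, i ≤ j → v j ⊆ v i

/-- A strategy for Odd: a value for every finite sequence of odd length. -/
def TopOddStrategy (X : Type*) := (k : ℕ) → (Fin (2 * k + 1) → Set X) → Set X

/-- A strategy for Odd is valid if it assigns, to every finite decreasing
sequence of nonempty open sets of odd length, a nonempty open subset of its
last term. -/
def TopOddValid (s : TopOddStrategy X) : Prop :=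
  ∀ (k : ℕ) (v : Fin (2 * k + 1) → Set X), TopPartialPlay v →
    IsOpen (s k v) ∧ (s k v).Nonempty ∧ s k v ⊆ v (Fin.last (2 * k))

/-- A play follows Odd's strategy `s` if every odd-indexed term is the value of
`s` on the preceding terms. -/
def TopOddFollows (U : ℕ → Set X) (s : TopOddStrategy X) : Prop :=
  ∀ k : ℕ, U (2 * k + 1) = s k (fun i => U i.val)

/-- Odd has a winning strategy in the classical Banach–Mazur game `BM(X)`
(he wins iff the intersection of the play is nonempty). -/
def TopOddWins (X : Type*) [TopologicalSpace X] : Prop :=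
  ∃ s : TopOddStrategy X, TopOddValid s ∧
    ∀ U : ℕ → Set X, TopPlay U → TopOddFollows U s → (⋂ n, U n).Nonempty

/-- A strategy for Eve: a value for the empty sequence and for every finite
sequence of even positive length. -/
def TopEveStrategy (X : Type*) := (k : ℕ) → (Fin (2 * k) → Set X) → Set X

/-- A strategy for Eve is valid if it assigns, to every finite decreasing
sequence of nonempty open sets of even length, a nonempty open set contained in
all of its terms (for the empty sequence: just a nonempty open set). -/
def TopEveValid (e : TopEveStrategy X) : Prop :=
  ∀ (k : ℕ) (v : Fin (2 * k) → Set X), TopPartialPlay v →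
    IsOpen (e k v) ∧ (e k v).Nonempty ∧ ∀ i : Fin (2 * k), e k v ⊆ v i

/-- A play follows Eve's strategy `e` if every even-indexed term is the value of
`e` on the preceding terms. -/
def TopEveFollows (U : ℕ → Set X) (e : TopEveStrategy X) : Prop :=
  ∀ k : ℕ, U (2 * k) = e k (fun i => U i.val)

/-- Eve has a winning strategy in the classical Banach–Mazur game `BM(X)`
(she wins iff the intersection of the play is empty). -/
def TopEveWins (X : Type*) [TopologicalSpace X] : Prop :=
  ∃ e : TopEveStrategy X, TopEveValid e ∧
    ∀ U : ℕ → Set X, TopPlay U → TopEveFollows U e → ¬ (⋂ n, U n).Nonempty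

/-- Odd has a winning strategy in the game `BM(X, ⋆)` (he wins iff the
intersection of the play is a one-point set). -/
def TopOddWinsStar (X : Type*) [TopologicalSpace X] : Prop :=
  ∃ s : TopOddStrategy X, TopOddValid s ∧
    ∀ U : ℕ → Set X, TopPlay U → TopOddFollows U s → ∃ x : X, (⋂ n, U n) = {x}

/-- Eve has a winning strategy in the game `BM(X, ⋆)` (she wins iff the
intersection of the play is not a one-point set). -/
def TopEveWinsStar (X : Type*) [TopologicalSpace X] : Prop :=
  ∃ e : TopEveStrategy X, TopEveValid e ∧
    ∀ U : ℕ → Set X, TopPlay U → TopEveFollows U e → ¬ ∃ x : X, (⋂ n, U n) = {x}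

/-- A topological space is completely metrizable if its topology is induced by a
complete metric. -/
def IsCompletelyMetrizable (Y : Type*) [t : TopologicalSpace Y] : Prop :=
  ∃ m : MetricSpace Y, m.toUniformSpace.toTopologicalSpace = t ∧
    @CompleteSpace Y m.toUniformSpace

end BMtop

open Set PiNat

namespace BMProof

/-- prefix of `f` of length `n`, most recent entry first -/
def pre (f : ℕ → Bool) : ℕ → List Bool
  | 0 => []
  | n + 1 => f n :: pre f n

@[simp] lemma pre_length (f : ℕ → Bool) (n : ℕ) : (pre f n).length = n := by
  induction n with
  | zero => rfl
  | succ n ih => simp [pre, ih]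

lemma pre_eq_of_agree {f g : ℕ → Bool} {n : ℕ} (h : ∀ i < n, f i = g i) :
    pre f n = pre g n := by
  induction n with
  | zero => rfl
  | succ n ih =>
    simp only [pre]
    rw [h n (Nat.lt_succ_self n), ih fun i hi => h i (hi.trans (Nat.lt_succ_self n))]

/-- A Cantor scheme of cylinders indexed by finite binary strings. -/
structure Scheme where
  c : List Bool → (ℕ → Bool)
  m : List Bool → ℕ
  hm : ∀ σ : List Bool, σ.length ≤ m σ
  hnest : ∀ (σ : List Bool) (b : Bool),
    cylinder (c (b :: σ)) (m (b :: σ)) ⊆ cylinder (c σ) (m σ)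
  hdisj : ∀ σ : List Bool,
    cylinder (c (true :: σ)) (m (true :: σ)) ∩ cylinder (c (false :: σ)) (m (false :: σ)) = ∅

namespace Scheme

variable (S : Scheme)

lemma nest_le (f : ℕ → Bool) : ∀ {k n : ℕ}, k ≤ n →
    cylinder (S.c (pre f n)) (S.m (pre f n)) ⊆ cylinder (S.c (pre f k)) (S.m (pre f k)) := by
  intro k n hkn
  induction n with
  | zero => obtain rfl : k = 0 := Nat.le_zero.mp hkn; exact subset_rfl
  | succ n ih =>
    rcases Nat.eq_or_lt_of_le hkn with rfl | h
    · exact subset_rfl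
    · exact (S.hnest (pre f n) (f n)).trans (ih (Nat.lt_succ_iff.mp h))

/-- The limit point of the branch `f`. -/
def lim (f : ℕ → Bool) : ℕ → Bool := fun i => S.c (pre f (i + 1)) i

lemma lim_mem (f : ℕ → Bool) (n : ℕ) :
    S.lim f ∈ cylinder (S.c (pre f n)) (S.m (pre f n)) := by
  intro i hi
  set N := max n (i + 1) with hN
  have h1 : S.c (pre f N) ∈ cylinder (S.c (pre f (i + 1))) (S.m (pre f (i + 1))) :=
    S.nest_le f (le_max_right _ _) (self_mem_cylinder _ _)
  have h2 : S.c (pre f N) ∈ cylinder (S.c (pre f n)) (S.m (pre f n)) :=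
    S.nest_le f (le_max_left _ _) (self_mem_cylinder _ _)
  have hi' : i < S.m (pre f (i + 1)) := lt_of_lt_of_le (Nat.lt_succ_self i) (by
    simpa using S.hm (pre f (i + 1)))
  calc S.lim f i = S.c (pre f (i+1)) i := rfl
    _ = S.c (pre f N) i := (h1 i hi').symm
    _ = S.c (pre f n) i := h2 i hi

lemma eq_lim {f : ℕ → Bool} {y : ℕ → Bool}
    (h : ∀ n, y ∈ cylinder (S.c (pre f n)) (S.m (pre f n))) : y = S.lim f := by
  funext i
  have hi' : i < S.m (pre f (i + 1)) := lt_of_lt_of_le (Nat.lt_succ_self i) (by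
    simpa using S.hm (pre f (i + 1)))
  exact h (i + 1) i hi'

lemma lim_injective : Function.Injective S.lim := by
  intro f g hfg
  by_contra hne
  have hex : ∃ n, f n ≠ g n := Function.ne_iff.mp hne
  set n := Nat.find hex with hn
  have hmin : ∀ i < n, f i = g i := fun i hi => by
    by_contra h; exact Nat.find_min hex hi h
  have hpre : pre f n = pre g n := pre_eq_of_agree hmin
  have h1 : S.lim f ∈ cylinder (S.c (pre f (n+1))) (S.m (pre f (n+1))) := S.lim_mem f (n+1)
  have h2 : S.lim f ∈ cylinder (S.c (pre g (n+1))) (S.m (pre g (n+1))) := by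
    rw [hfg]; exact S.lim_mem g (n+1)
  have hfn : f n ≠ g n := Nat.find_spec hex
  have : S.lim f ∈ cylinder (S.c (true :: pre f n)) (S.m (true :: pre f n)) ∩
      cylinder (S.c (false :: pre f n)) (S.m (false :: pre f n)) := by
    simp only [pre] at h1 h2
    rw [hpre] at h1 ⊢
    cases hf : f n <;> cases hg : g n
    · exact absurd (hf.trans hg.symm) hfn
    · rw [hf] at h1; rw [hg] at h2; rw [← hpre] at h2; rw [hpre] at h2
      exact ⟨h2, h1⟩
    · rw [hf] at h1; rw [hg] at h2; rw [← hpre] at h2; rw [hpre] at h2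
      exact ⟨h1, h2⟩
    · exact absurd (hf.trans hg.symm) hfn
  rw [S.hdisj (pre f n)] at this
  exact this

lemma pre_eq_of_mem_cylinder {f g : ℕ → Bool} {n : ℕ} (h : g ∈ cylinder f n) :
    pre g n = pre f n := pre_eq_of_agree fun i hi => h i hi

lemma lim_continuous : Continuous S.lim := by
  apply continuous_pi
  intro i
  apply IsLocallyConstant.continuous
  rw [IsLocallyConstant.iff_exists_open]
  intro f
  refine ⟨cylinder f (i + 1), isOpen_cylinder _ _ _, self_mem_cylinder _ _, ?_⟩
  intro g hg
  show S.lim g i = S.lim f i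
  unfold lim
  rw [pre_eq_of_mem_cylinder hg]

end Scheme

instance : PolishSpace (ℕ → Bool) := by
  letI : MetricSpace (ℕ → Bool) := PiNat.metricSpaceOfDiscreteUniformity (fun _ => rfl)
  infer_instance

-- test availability
example : PolishSpace (ℕ → Bool) := inferInstance
example : CompactSpace (ℕ → Bool) := inferInstance
example : T2Space (ℕ → Bool) := inferInstance

/-- every open set containing `x` contains a cylinder around `x` -/
lemma exists_cylinder_subset {V : Set (ℕ → Bool)} (hV : IsOpen V) {x : ℕ → Bool} (hx : x ∈ V) :
    ∃ n, cylinder x n ⊆ V := by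
  obtain ⟨u, ⟨y, n, rfl⟩, hxu, huV⟩ :=
    (isTopologicalBasis_cylinders (fun _ : ℕ => Bool)).exists_subset_of_mem_open hx hV
  exact ⟨n, by rw [mem_cylinder_iff_eq.mp hxu]; exact huV⟩

/-- in any cylinder there is a point different from two given points -/
lemma exists_ne_ne_mem_cylinder (z : ℕ → Bool) (k : ℕ) (a b : ℕ → Bool) :
    ∃ y ∈ cylinder z k, y ≠ a ∧ y ≠ b := by
  refine ⟨fun i => if i < k then z i else if i = k then !(a i) else !(b i), ?_, ?_, ?_⟩
  · intro i hi; simp [hi]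
  · intro h
    have := congrFun h k
    simp at this
  · intro h
    have := congrFun h (k + 1)
    simp only [if_neg (by omega : ¬ (k+1 < k)), if_neg (by omega : ¬ (k+1 = k))] at this
    exact Bool.not_ne_self _ this



lemma polish_to_icm (Y : Type*) [t : TopologicalSpace Y] [h : PolishSpace Y] :
    ∃ m : MetricSpace Y, m.toUniformSpace.toTopologicalSpace = t ∧
      @CompleteSpace Y m.toUniformSpace := h.complete

variable (S : Scheme)

lemma range_lim_isClosed : IsClosed (range S.lim) :=
  (isCompact_range S.lim_continuous).isClosed

lemma range_lim_icm : ∃ m : MetricSpace ↥(range S.lim),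
    m.toUniformSpace.toTopologicalSpace = instTopologicalSpaceSubtype ∧
      @CompleteSpace ↥(range S.lim) m.toUniformSpace := by
  have := (range_lim_isClosed S).polishSpace
  exact polish_to_icm _

lemma range_lim_acc : ∀ x ∈ range S.lim, x ∈ closure (range S.lim \ {x}) := by
  rintro x ⟨f, rfl⟩
  rw [mem_closure_iff]
  intro V hV hxV
  obtain ⟨k, hk⟩ := exists_cylinder_subset hV hxV
  set g : ℕ → Bool := fun i => if i < k + 1 then f i else !(f i) with hg
  have hgf : g ≠ f := by
    intro h
    have := congrFun h (k + 1)
    simp only [hg, if_neg (lt_irrefl (k+1))] at this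
    exact Bool.not_ne_self _ this
  have hpre : pre g (k + 1) = pre f (k + 1) :=
    pre_eq_of_agree fun i hi => by simp [hg, hi]; omega
  have h1 : S.lim g ∈ cylinder (S.c (pre f (k+1))) (S.m (pre f (k+1))) := by
    rw [← hpre]; exact S.lim_mem g (k+1)
  have h2 : S.lim f ∈ cylinder (S.c (pre f (k+1))) (S.m (pre f (k+1))) := S.lim_mem f (k+1)
  have hmk : k ≤ S.m (pre f (k+1)) := by
    have := S.hm (pre f (k+1)); simp at this; omega
  have hcyl : S.lim g ∈ cylinder (S.lim f) k := by
    intro i hi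
    rw [h1 i (lt_of_lt_of_le hi hmk), h2 i (lt_of_lt_of_le hi hmk)]
  refine ⟨S.lim g, hk hcyl, ⟨g, rfl⟩, ?_⟩
  simp only [mem_singleton_iff]
  exact fun h => hgf (S.lim_injective h)

lemma range_lim_nonempty : (range S.lim).Nonempty := ⟨S.lim (fun _ => false), mem_range_self _⟩

/-- The Bernstein property. -/
def Bern (X : Set (ℕ → Bool)) : Prop :=
  ∀ P : Set (ℕ → Bool), P.Nonempty → IsCompletelyMetrizable ↥P →
    (∀ x ∈ P, x ∈ closure (P \ {x})) → (X ∩ P).Nonempty ∧ (P \ X).Nonempty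

lemma open_icm {V : Set (ℕ → Bool)} (hV : IsOpen V) : IsCompletelyMetrizable ↥V := by
  have := hV.polishSpace
  exact polish_to_icm _

lemma open_acc {V : Set (ℕ → Bool)} (hV : IsOpen V) : ∀ x ∈ V, x ∈ closure (V \ {x}) := by
  intro x hx
  rw [mem_closure_iff]
  intro W hW hxW
  obtain ⟨k, hk⟩ := exists_cylinder_subset (hW.inter hV) ⟨hxW, hx⟩
  obtain ⟨y, hy, hyx, -⟩ := exists_ne_ne_mem_cylinder x k x x
  exact ⟨y, (hk hy).1, (hk hy).2, hyx⟩

lemma bern_open {X : Set (ℕ → Bool)} (hB : Bern X) {V : Set (ℕ → Bool)} (hV : IsOpen V)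
    (hne : V.Nonempty) : (X ∩ V).Nonempty ∧ (V \ X).Nonempty :=
  hB V hne (open_icm hV) (open_acc hV)

lemma bern_nonempty {X : Set (ℕ → Bool)} (hB : Bern X) : X.Nonempty := by
  have := (bern_open hB isOpen_univ univ_nonempty).1
  rwa [inter_univ] at this

lemma two_in_open {X : Set (ℕ → Bool)} (hB : Bern X) {V : Set (ℕ → Bool)} (hV : IsOpen V)
    (hne : (X ∩ V).Nonempty) : ∃ a ∈ X ∩ V, ∃ b ∈ X ∩ V, a ≠ b := by
  obtain ⟨x, hx⟩ := hne
  have hP : IsOpen (V \ {x}) := hV.sdiff isClosed_singleton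
  have hPne : (V \ {x}).Nonempty := by
    obtain ⟨k, hk⟩ := exists_cylinder_subset hV hx.2
    obtain ⟨y, hy, hyx, -⟩ := exists_ne_ne_mem_cylinder x k x x
    exact ⟨y, hk hy, hyx⟩
  obtain ⟨b, hbX, hbP⟩ := (bern_open hB hP hPne).1
  exact ⟨x, hx, b, ⟨hbX, hbP.1⟩, fun h => hbP.2 (by simp [← h])⟩

lemma bern_split {X : Set (ℕ → Bool)} (hB : Bern X) {V : Set (ℕ → Bool)} (hV : IsOpen V)
    (hne : (X ∩ V).Nonempty) (M : ℕ) :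
    ∃ (x : Bool → (ℕ → Bool)) (L : ℕ), M ≤ L ∧ (∀ b, x b ∈ X) ∧
      (∀ b, cylinder (x b) L ⊆ V) ∧
      cylinder (x true) L ∩ cylinder (x false) L = ∅ := by
  obtain ⟨a, ha, b, hb, hab⟩ := two_in_open hB hV hne
  obtain ⟨la, hla⟩ := exists_cylinder_subset hV ha.2
  obtain ⟨lb, hlb⟩ := exists_cylinder_subset hV hb.2
  obtain ⟨j, hj⟩ := Function.ne_iff.mp hab
  refine ⟨fun bb => bif bb then a else b, max (max la lb) (max M (j + 1)),
    le_trans (le_max_left _ _) (le_max_right _ _), ?_, ?_, ?_⟩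
  · intro bb; cases bb
    · exact hb.1
    · exact ha.1
  · intro bb; cases bb
    · exact (cylinder_anti b (le_trans (le_max_right la lb) (le_max_left _ _))).trans hlb
    · exact (cylinder_anti a (le_trans (le_max_left la lb) (le_max_left _ _))).trans hla
  · ext y
    simp only [mem_inter_iff, mem_cylinder_iff, mem_empty_iff_false, iff_false, not_and]
    intro h1 h2
    have hjL : j < max (max la lb) (max M (j + 1)) := by
      have : j + 1 ≤ max M (j+1) := le_max_right _ _
      omega
    exact hj ((h1 j hjL).symm.trans (h2 j hjL))

/-! ### Machinery for the Odd player -/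

/-- State of the inductive construction against Odd's strategy, at level `n`:
a partial play of length `2n+2` (constant afterwards) together with a cylinder
containing (the image of) Odd's last move. -/
structure OSt (X : Set (ℕ → Bool)) (s : TopOddStrategy ↥X) (n : ℕ) where
  p : ℕ → Set ↥X
  c : ℕ → Bool
  m : ℕ
  hopen : ∀ i, IsOpen (p i)
  hne : ∀ i, (p i).Nonempty
  hmono : ∀ i j : ℕ, i ≤ j → p j ⊆ p i
  hstab : ∀ j, 2 * n + 1 ≤ j → p j = p (2 * n + 1)
  hfol : ∀ k, k ≤ n → p (2 * k + 1) = s k (fun i => p i)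
  hm : n ≤ m
  hsub : p (2 * n + 1) ⊆ Subtype.val ⁻¹' cylinder c m

lemma OSt.exists_root {X : Set (ℕ → Bool)} (s : TopOddStrategy ↥X) (hs : TopOddValid s)
    (hXne : X.Nonempty) : Nonempty (OSt X s 0) := by
  have hne : (univ : Set ↥X).Nonempty := ⟨⟨hXne.choose, hXne.choose_spec⟩, trivial⟩
  set v : Fin (2 * 0 + 1) → Set ↥X := fun _ => univ with hv
  have hpp : TopPartialPlay v := ⟨fun _ => isOpen_univ, fun _ => hne, fun _ _ _ => subset_rfl⟩
  obtain ⟨ho, hn, hsub⟩ := hs 0 v hpp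
  refine ⟨⟨fun i => if i = 0 then univ else s 0 v, fun _ => false, 0,
    ?_, ?_, ?_, ?_, ?_, le_rfl, ?_⟩⟩
  · intro i
    by_cases hi : i = 0 <;> simp only [if_pos, if_neg, hi, if_true, if_false]
    · exact isOpen_univ
    · exact ho
  · intro i
    by_cases hi : i = 0 <;> simp only [if_pos, if_neg, hi, if_true, if_false]
    · exact hne
    · exact hn
  · intro i j hij
    by_cases hi : i = 0
    · simp only [hi, if_pos rfl]; exact subset_univ _
    · have hj : ¬ j = 0 := by omega
      simp only [if_neg hi, if_neg hj]
      exact subset_rfl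
  · intro j hj
    have hj' : ¬ j = 0 := by omega
    simp only [if_neg hj', if_neg (show ¬ 2 * 0 + 1 = 0 by omega)]
  · intro k hk
    obtain rfl : k = 0 := Nat.le_zero.mp hk
    have hveq : (fun i : Fin (2 * 0 + 1) =>
        (fun i : ℕ => if i = 0 then (univ : Set ↥X) else s 0 v) ↑i) = v := by
      funext i
      have : (i : ℕ) = 0 := by omega
      simp [this, hv]
    simp only [Nat.mul_zero, Nat.zero_add, if_neg (one_ne_zero), hveq]
  · simp only [if_neg (one_ne_zero), cylinder_zero]
    exact fun a _ => mem_univ _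

lemma OSt.extend {X : Set (ℕ → Bool)} {s : TopOddStrategy ↥X} (hs : TopOddValid s)
    (hB : Bern X) {n : ℕ} (q : OSt X s n) :
    ∃ E : Bool → OSt X s (n + 1),
      (∀ b, ∀ i, i ≤ 2 * n + 1 → (E b).p i = q.p i) ∧
      (∀ b, cylinder (E b).c (E b).m ⊆ cylinder q.c q.m) ∧
      cylinder (E true).c (E true).m ∩ cylinder (E false).c (E false).m = ∅ := by
  obtain ⟨V, hVopen, hVA⟩ := isOpen_induced_iff.mp (q.hopen (2 * n + 1))
  set V' := V ∩ cylinder q.c q.m with hV'def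
  have hV'open : IsOpen V' := hVopen.inter (isOpen_cylinder _ _ _)
  have hAV' : q.p (2 * n + 1) ⊆ Subtype.val ⁻¹' V' := by
    intro a ha
    exact ⟨by rw [← hVA] at ha; exact ha, q.hsub ha⟩
  have hXV' : (X ∩ V').Nonempty := by
    obtain ⟨a, ha⟩ := q.hne (2 * n + 1)
    exact ⟨a, a.2, hAV' ha⟩
  obtain ⟨x, L, hL, hxX, hcylV, hdisj⟩ := bern_split hB hV'open hXV' (n + 1)
  have hcylA : ∀ b, (Subtype.val ⁻¹' cylinder (x b) L : Set ↥X) ⊆ q.p (2 * n + 1) := by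
    intro b a ha
    rw [← hVA]
    exact ((hcylV b) ha).1
  set W : Bool → Set ↥X := fun b => Subtype.val ⁻¹' cylinder (x b) L with hWdef
  have hWopen : ∀ b, IsOpen (W b) := fun b =>
    (isOpen_cylinder _ _ _).preimage continuous_subtype_val
  have hWne : ∀ b, (W b).Nonempty := fun b =>
    ⟨⟨x b, hxX b⟩, self_mem_cylinder _ _⟩
  set q' : Bool → ℕ → Set ↥X := fun b i => if i ≤ 2 * n + 1 then q.p i else W b with hq'def
  have hq'mono : ∀ b, ∀ i j : ℕ, i ≤ j → q' b j ⊆ q' b i := by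
    intro b i j hij
    by_cases hj : j ≤ 2 * n + 1
    · have hi : i ≤ 2 * n + 1 := le_trans hij hj
      simp only [hq'def, if_pos hj, if_pos hi]
      exact q.hmono i j hij
    · by_cases hi : i ≤ 2 * n + 1
      · simp only [hq'def, if_neg hj, if_pos hi]
        exact (hcylA b).trans (q.hmono i (2 * n + 1) hi)
      · simp only [hq'def, if_neg hj, if_neg hi]
        exact subset_rfl
  have hpp : ∀ b, TopPartialPlay (fun i : Fin (2 * (n + 1) + 1) => q' b ↑i) := by
    intro b
    refine ⟨fun i => ?_, fun i => ?_, fun i j hij => hq'mono b i j hij⟩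
    · by_cases hi : (i : ℕ) ≤ 2 * n + 1 <;>
        simp only [hq'def, if_pos, if_neg, hi, if_true, if_false]
      · exact q.hopen _
      · exact hWopen b
    · by_cases hi : (i : ℕ) ≤ 2 * n + 1 <;>
        simp only [hq'def, if_pos, if_neg, hi, if_true, if_false]
      · exact q.hne _
      · exact hWne b
  set Snew : Bool → Set ↥X := fun b => s (n + 1) (fun i => q' b ↑i) with hSdef
  have hSprop : ∀ b, IsOpen (Snew b) ∧ (Snew b).Nonempty ∧ Snew b ⊆ W b := by
    intro b
    obtain ⟨h1, h2, h3⟩ := hs (n + 1) _ (hpp b)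
    refine ⟨h1, h2, h3.trans ?_⟩
    have hlast : ((Fin.last (2 * (n + 1))) : ℕ) = 2 * n + 2 := by
      rw [Fin.val_last]; omega
    rw [hlast]
    simp only [hq'def, if_neg (by omega : ¬ 2 * n + 2 ≤ 2 * n + 1)]
    exact subset_rfl
  set pnew : Bool → ℕ → Set ↥X := fun b i => if i ≤ 2 * (n + 1) then q' b i else Snew b
    with hpdef
  have hplo : ∀ b i, i ≤ 2 * (n + 1) → pnew b i = q' b i := by
    intro b i hi; simp only [hpdef, if_pos hi]
  have hphi : ∀ b i, 2 * (n + 1) < i → pnew b i = Snew b := by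
    intro b i hi; simp only [hpdef, if_neg (by omega : ¬ i ≤ 2 * (n + 1))]
  have hpsucc : ∀ b i, pnew b (i + 1) ⊆ pnew b i := by
    intro b i
    by_cases h1 : i + 1 ≤ 2 * (n + 1)
    · rw [hplo b _ h1, hplo b _ (by omega)]
      exact hq'mono b i (i + 1) (Nat.le_succ i)
    · rw [hphi b _ (by omega)]
      by_cases h2 : i ≤ 2 * (n + 1)
      · rw [hplo b _ h2]
        have hieq : i = 2 * (n + 1) := by omega
        subst hieq
        refine ((hSprop b).2.2).trans ?_
        simp only [hq'def, if_neg (by omega : ¬ 2 * (n + 1) ≤ 2 * n + 1)]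
        exact subset_rfl
      · rw [hphi b _ (by omega)]
  refine ⟨fun b => ⟨pnew b, x b, L, ?_, ?_, ?_, ?_, ?_, hL, ?_⟩, ?_, ?_, ?_⟩
  · -- open
    intro i
    by_cases hi : i ≤ 2 * (n + 1)
    · rw [hplo b _ hi]; exact ((hpp b).1 ⟨i, by omega⟩)
    · rw [hphi b _ (by omega)]; exact (hSprop b).1
  · -- nonempty
    intro i
    by_cases hi : i ≤ 2 * (n + 1)
    · rw [hplo b _ hi]; exact ((hpp b).2.1 ⟨i, by omega⟩)
    · rw [hphi b _ (by omega)]; exact (hSprop b).2.1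
  · -- mono
    exact fun i j hij => antitone_nat_of_succ_le (hpsucc b) hij
  · -- stab
    intro j hj
    rw [hphi b _ (by omega), hphi b _ (by omega)]
  · -- follows
    intro k hk
    rcases Nat.eq_or_lt_of_le hk with hkeq | hklt
    · subst hkeq
      rw [hphi b _ (by omega)]
      have heq : (fun i : Fin (2 * (n + 1) + 1) => pnew b ↑i)
          = (fun i : Fin (2 * (n + 1) + 1) => q' b ↑i) := by
        funext i
        exact hplo b _ (by omega)
      rw [heq, hSdef]
    · have hkn : k ≤ n := by omega
      have heq2 : (fun i : Fin (2 * k + 1) => pnew b ↑i)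
          = (fun i : Fin (2 * k + 1) => q.p ↑i) := by
        funext i
        rw [hplo b _ (by omega)]
        simp only [hq'def, if_pos (show (i : ℕ) ≤ 2 * n + 1 by omega)]
      have h1 : q' b (2 * k + 1) = q.p (2 * k + 1) := by
        simp only [hq'def, if_pos (by omega : 2 * k + 1 ≤ 2 * n + 1)]
      rw [hplo b _ (by omega), h1, q.hfol k hkn, heq2]
  · -- hsub
    rw [hphi b _ (by omega)]
    exact (hSprop b).2.2
  · -- R1
    intro b i hi
    show pnew b i = q.p i
    rw [hplo b _ (by omega)]
    simp only [hq'def, if_pos hi]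
  · -- R2 nesting
    intro b
    exact (hcylV b).trans (inter_subset_right)
  · -- R3 disjoint
    exact hdisj

noncomputable def Oext {X : Set (ℕ → Bool)} {s : TopOddStrategy ↥X} (hs : TopOddValid s)
    (hB : Bern X) {n : ℕ} (q : OSt X s n) : Bool → OSt X s (n + 1) :=
  (OSt.extend hs hB q).choose

lemma Oext_spec {X : Set (ℕ → Bool)} {s : TopOddStrategy ↥X} (hs : TopOddValid s)
    (hB : Bern X) {n : ℕ} (q : OSt X s n) :
    (∀ b, ∀ i, i ≤ 2 * n + 1 → (Oext hs hB q b).p i = q.p i) ∧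
      (∀ b, cylinder (Oext hs hB q b).c (Oext hs hB q b).m ⊆ cylinder q.c q.m) ∧
      cylinder (Oext hs hB q true).c (Oext hs hB q true).m ∩
        cylinder (Oext hs hB q false).c (Oext hs hB q false).m = ∅ :=
  (OSt.extend hs hB q).choose_spec

noncomputable def OT {X : Set (ℕ → Bool)} {s : TopOddStrategy ↥X} (hs : TopOddValid s)
    (hB : Bern X) : (σ : List Bool) → OSt X s σ.length
  | [] => (OSt.exists_root s hs (bern_nonempty hB)).some
  | b :: σ => Oext hs hB (OT hs hB σ) b

lemma OT_consist {X : Set (ℕ → Bool)} {s : TopOddStrategy ↥X} (hs : TopOddValid s)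
    (hB : Bern X) (f : ℕ → Bool) :
    ∀ {k n : ℕ}, k ≤ n → ∀ i, i ≤ 2 * k + 1 →
      (OT hs hB (pre f n)).p i = (OT hs hB (pre f k)).p i := by
  intro k n hkn
  induction n with
  | zero => obtain rfl : k = 0 := Nat.le_zero.mp hkn; intro i _; rfl
  | succ n ih =>
    rcases Nat.eq_or_lt_of_le hkn with rfl | h
    · intro i _; rfl
    · have hkn' : k ≤ n := Nat.lt_succ_iff.mp h
      intro i hi
      have h1 : (OT hs hB (pre f (n + 1))).p i = (OT hs hB (pre f n)).p i := by
        show (OT hs hB (f n :: pre f n)).p i = (OT hs hB (pre f n)).p i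
        have := (Oext_spec hs hB (OT hs hB (pre f n))).1 (f n) i
          (by rw [pre_length]; omega)
        exact this
      rw [h1, ih hkn' i hi]

lemma noOddWin (X : Set (ℕ → Bool)) (hB : Bern X) : ¬ TopOddWins ↥X := by
  rintro ⟨s, hs, hwin⟩
  set U : (ℕ → Bool) → ℕ → Set ↥X := fun f i => (OT hs hB (pre f i)).p i with hUdef
  have hUeq : ∀ (f : ℕ → Bool) (j N : ℕ), j ≤ N → U f j = (OT hs hB (pre f N)).p j := by
    intro f j N hjN
    exact (OT_consist hs hB f hjN j (by omega)).symm
  set S : Scheme := ⟨fun σ => (OT hs hB σ).c, fun σ => (OT hs hB σ).m,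
    fun σ => (OT hs hB σ).hm,
    fun σ b => (Oext_spec hs hB (OT hs hB σ)).2.1 b,
    fun σ => (Oext_spec hs hB (OT hs hB σ)).2.2⟩ with hSdef
  have hmem : ∀ f : ℕ → Bool, S.lim f ∈ X := by
    intro f
    have hplay : TopPlay (U f) := by
      refine ⟨fun i => (OT hs hB (pre f i)).hopen i, fun i => (OT hs hB (pre f i)).hne i, ?_⟩
      intro j
      rw [hUeq f j (j + 1) (Nat.le_succ j)]
      exact (OT hs hB (pre f (j + 1))).hmono j (j + 1) (Nat.le_succ j)
    have hfol : TopOddFollows (U f) s := by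
      intro k
      have hk : k ≤ (pre f (2 * k + 1)).length := by rw [pre_length]; omega
      have h1 := (OT hs hB (pre f (2 * k + 1))).hfol k hk
      have h2 : (fun i : Fin (2 * k + 1) => U f ↑i)
          = (fun i : Fin (2 * k + 1) => (OT hs hB (pre f (2 * k + 1))).p ↑i) := by
        funext i
        exact hUeq f ↑i (2 * k + 1) (by omega)
      show U f (2 * k + 1) = _
      rw [h2]
      exact h1
    obtain ⟨y, hy⟩ := hwin (U f) hplay hfol
    have hycyl : ∀ n, (y : ℕ → Bool) ∈ cylinder (S.c (pre f n)) (S.m (pre f n)) := by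
      intro n
      have hy1 : y ∈ U f (2 * n + 1) := mem_iInter.mp hy (2 * n + 1)
      rw [hUeq f (2 * n + 1) (2 * n + 1) le_rfl] at hy1
      have hy2 : y ∈ (OT hs hB (pre f n)).p (2 * n + 1) := by
        rw [OT_consist hs hB f (by omega : n ≤ 2 * n + 1) (2 * n + 1) le_rfl] at hy1
        exact hy1
      have hsub := (OT hs hB (pre f n)).hsub
      have h2n : 2 * (pre f n).length + 1 = 2 * n + 1 := by rw [pre_length]
      rw [h2n] at hsub
      exact hsub hy2
    have : (y : ℕ → Bool) = S.lim f := S.eq_lim hycyl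
    rw [← this]
    exact y.2
  obtain ⟨z, hz1, hz2⟩ := (hB (range S.lim) (range_lim_nonempty S) (range_lim_icm S)
    (range_lim_acc S)).2
  obtain ⟨f, rfl⟩ := hz1
  exact hz2 (hmem f)

/-! ### Machinery for the Eve player -/

structure ESt (X : Set (ℕ → Bool)) (e : TopEveStrategy ↥X) (n : ℕ) where
  p : ℕ → Set ↥X
  c : ℕ → Bool
  m : ℕ
  hopen : ∀ i, IsOpen (p i)
  hne : ∀ i, (p i).Nonempty
  hmono : ∀ i j : ℕ, i ≤ j → p j ⊆ p i
  hstab : ∀ j, 2 * n ≤ j → p j = p (2 * n)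
  hfol : ∀ k, k ≤ n → p (2 * k) = e k (fun i => p i)
  hm : n ≤ m
  hsubA : p (2 * n) ⊆ Subtype.val ⁻¹' cylinder c m
  hbig : ∀ k, n = k + 1 → Subtype.val ⁻¹' cylinder c m ⊆ p (2 * k + 1)

lemma ESt.exists_root {X : Set (ℕ → Bool)} (e : TopEveStrategy ↥X) (he : TopEveValid e) :
    Nonempty (ESt X e 0) := by
  set v : Fin (2 * 0) → Set ↥X := fun i => i.elim0 with hv
  have hpp : TopPartialPlay v := ⟨fun i => i.elim0, fun i => i.elim0, fun i _ _ => i.elim0⟩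
  obtain ⟨ho, hn, -⟩ := he 0 v hpp
  refine ⟨⟨fun _ => e 0 v, fun _ => false, 0, fun _ => ho, fun _ => hn,
    fun _ _ _ => subset_rfl, fun _ _ => rfl, ?_, le_rfl, ?_, ?_⟩⟩
  · intro k hk
    obtain rfl : k = 0 := Nat.le_zero.mp hk
    have : (fun i : Fin (2 * 0) => e 0 v) = v := by
      funext i; exact i.elim0
    rw [this]
  · simp only [cylinder_zero]
    exact fun a _ => mem_univ _
  · intro k hk
    exact absurd hk (by omega)

lemma ESt.extend {X : Set (ℕ → Bool)} {e : TopEveStrategy ↥X} (he : TopEveValid e)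
    (hB : Bern X) {n : ℕ} (q : ESt X e n) :
    ∃ E : Bool → ESt X e (n + 1),
      (∀ b, ∀ i, i ≤ 2 * n → (E b).p i = q.p i) ∧
      (∀ b, cylinder (E b).c (E b).m ⊆ cylinder q.c q.m) ∧
      cylinder (E true).c (E true).m ∩ cylinder (E false).c (E false).m = ∅ := by
  obtain ⟨V, hVopen, hVA⟩ := isOpen_induced_iff.mp (q.hopen (2 * n))
  set V' := V ∩ cylinder q.c q.m with hV'def
  have hV'open : IsOpen V' := hVopen.inter (isOpen_cylinder _ _ _)
  have hAV' : q.p (2 * n) ⊆ Subtype.val ⁻¹' V' := by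
    intro a ha
    exact ⟨by rw [← hVA] at ha; exact ha, q.hsubA ha⟩
  have hXV' : (X ∩ V').Nonempty := by
    obtain ⟨a, ha⟩ := q.hne (2 * n)
    exact ⟨a, a.2, hAV' ha⟩
  obtain ⟨x, L, hL, hxX, hcylV, hdisj⟩ := bern_split hB hV'open hXV' (n + 1)
  set W : Bool → Set ↥X := fun b => Subtype.val ⁻¹' cylinder (x b) L with hWdef
  have hWA : ∀ b, W b ⊆ q.p (2 * n) := by
    intro b a ha
    rw [← hVA]
    exact ((hcylV b) ha).1
  have hWopen : ∀ b, IsOpen (W b) := fun b =>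
    (isOpen_cylinder _ _ _).preimage continuous_subtype_val
  have hWne : ∀ b, (W b).Nonempty := fun b => ⟨⟨x b, hxX b⟩, self_mem_cylinder _ _⟩
  set q' : Bool → ℕ → Set ↥X := fun b i => if i ≤ 2 * n then q.p i else W b with hq'def
  have hq'mono : ∀ b, ∀ i j : ℕ, i ≤ j → q' b j ⊆ q' b i := by
    intro b i j hij
    by_cases hj : j ≤ 2 * n
    · have hi : i ≤ 2 * n := le_trans hij hj
      simp only [hq'def, if_pos hj, if_pos hi]
      exact q.hmono i j hij
    · by_cases hi : i ≤ 2 * n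
      · simp only [hq'def, if_neg hj, if_pos hi]
        exact (hWA b).trans (q.hmono i (2 * n) hi)
      · simp only [hq'def, if_neg hj, if_neg hi]
        exact subset_rfl
  have hpp : ∀ b, TopPartialPlay (fun i : Fin (2 * (n + 1)) => q' b ↑i) := by
    intro b
    refine ⟨fun i => ?_, fun i => ?_, fun i j hij => hq'mono b i j hij⟩
    · by_cases hi : (i : ℕ) ≤ 2 * n <;>
        simp only [hq'def, if_pos, if_neg, hi, if_true, if_false]
      · exact q.hopen _
      · exact hWopen b
    · by_cases hi : (i : ℕ) ≤ 2 * n <;>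
        simp only [hq'def, if_pos, if_neg, hi, if_true, if_false]
      · exact q.hne _
      · exact hWne b
  set Enew : Bool → Set ↥X := fun b => e (n + 1) (fun i => q' b ↑i) with hEdef
  have hEprop : ∀ b, IsOpen (Enew b) ∧ (Enew b).Nonempty ∧ Enew b ⊆ W b := by
    intro b
    obtain ⟨h1, h2, h3⟩ := he (n + 1) _ (hpp b)
    refine ⟨h1, h2, (h3 ⟨2 * n + 1, by omega⟩).trans ?_⟩
    show q' b (2 * n + 1) ⊆ W b
    simp only [hq'def, if_neg (by omega : ¬ 2 * n + 1 ≤ 2 * n)]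
    exact subset_rfl
  set pnew : Bool → ℕ → Set ↥X := fun b i => if i ≤ 2 * n + 1 then q' b i else Enew b
    with hpdef
  have hplo : ∀ b i, i ≤ 2 * n + 1 → pnew b i = q' b i := by
    intro b i hi; simp only [hpdef, if_pos hi]
  have hphi : ∀ b i, 2 * n + 1 < i → pnew b i = Enew b := by
    intro b i hi; simp only [hpdef, if_neg (by omega : ¬ i ≤ 2 * n + 1)]
  have hpsucc : ∀ b i, pnew b (i + 1) ⊆ pnew b i := by
    intro b i
    by_cases h1 : i + 1 ≤ 2 * n + 1
    · rw [hplo b _ h1, hplo b _ (by omega)]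
      exact hq'mono b i (i + 1) (Nat.le_succ i)
    · rw [hphi b _ (by omega)]
      by_cases h2 : i ≤ 2 * n + 1
      · rw [hplo b _ h2]
        have hieq : i = 2 * n + 1 := by omega
        subst hieq
        refine ((hEprop b).2.2).trans ?_
        simp only [hq'def, if_neg (by omega : ¬ 2 * n + 1 ≤ 2 * n)]
        exact subset_rfl
      · rw [hphi b _ (by omega)]
  refine ⟨fun b => ⟨pnew b, x b, L, ?_, ?_, ?_, ?_, ?_, hL, ?_, ?_⟩, ?_, ?_, ?_⟩
  · -- open
    intro i
    by_cases hi : i ≤ 2 * n + 1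
    · rw [hplo b _ hi]; exact ((hpp b).1 ⟨i, by omega⟩)
    · rw [hphi b _ (by omega)]; exact (hEprop b).1
  · -- nonempty
    intro i
    by_cases hi : i ≤ 2 * n + 1
    · rw [hplo b _ hi]; exact ((hpp b).2.1 ⟨i, by omega⟩)
    · rw [hphi b _ (by omega)]; exact (hEprop b).2.1
  · -- mono
    exact fun i j hij => antitone_nat_of_succ_le (hpsucc b) hij
  · -- stab
    intro j hj
    rw [hphi b _ (by omega), hphi b _ (by omega)]
  · -- follows
    intro k hk
    rcases Nat.eq_or_lt_of_le hk with hkeq | hklt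
    · subst hkeq
      rw [hphi b _ (by omega)]
      have heq : (fun i : Fin (2 * (n + 1)) => pnew b ↑i)
          = (fun i : Fin (2 * (n + 1)) => q' b ↑i) := by
        funext i
        exact hplo b _ (by omega)
      rw [heq, hEdef]
    · have hkn : k ≤ n := by omega
      have heq2 : (fun i : Fin (2 * k) => pnew b ↑i)
          = (fun i : Fin (2 * k) => q.p ↑i) := by
        funext i
        rw [hplo b _ (by omega)]
        simp only [hq'def, if_pos (show (i : ℕ) ≤ 2 * n by omega)]
      have h1 : q' b (2 * k) = q.p (2 * k) := by
        simp only [hq'def, if_pos (by omega : 2 * k ≤ 2 * n)]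
      rw [hplo b _ (by omega), h1, q.hfol k hkn, heq2]
  · -- hsubA
    rw [hphi b _ (by omega)]
    exact (hEprop b).2.2
  · -- hbig
    intro k hk
    obtain rfl : k = n := by omega
    rw [hplo b _ (by omega)]
    simp only [hq'def, if_neg (show ¬ 2 * k + 1 ≤ 2 * k by omega)]
    exact fun a ha => ha
  · -- R1
    intro b i hi
    show pnew b i = q.p i
    rw [hplo b _ (by omega)]
    simp only [hq'def, if_pos hi]
  · -- R2
    intro b
    exact (hcylV b).trans (inter_subset_right)
  · -- R3
    exact hdisj

noncomputable def Eext {X : Set (ℕ → Bool)} {e : TopEveStrategy ↥X} (he : TopEveValid e)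
    (hB : Bern X) {n : ℕ} (q : ESt X e n) : Bool → ESt X e (n + 1) :=
  (ESt.extend he hB q).choose

lemma Eext_spec {X : Set (ℕ → Bool)} {e : TopEveStrategy ↥X} (he : TopEveValid e)
    (hB : Bern X) {n : ℕ} (q : ESt X e n) :
    (∀ b, ∀ i, i ≤ 2 * n → (Eext he hB q b).p i = q.p i) ∧
      (∀ b, cylinder (Eext he hB q b).c (Eext he hB q b).m ⊆ cylinder q.c q.m) ∧
      cylinder (Eext he hB q true).c (Eext he hB q true).m ∩
        cylinder (Eext he hB q false).c (Eext he hB q false).m = ∅ :=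
  (ESt.extend he hB q).choose_spec

noncomputable def ET {X : Set (ℕ → Bool)} {e : TopEveStrategy ↥X} (he : TopEveValid e)
    (hB : Bern X) : (σ : List Bool) → ESt X e σ.length
  | [] => (ESt.exists_root e he).some
  | b :: σ => Eext he hB (ET he hB σ) b

lemma ET_consist {X : Set (ℕ → Bool)} {e : TopEveStrategy ↥X} (he : TopEveValid e)
    (hB : Bern X) (f : ℕ → Bool) :
    ∀ {k n : ℕ}, k ≤ n → ∀ i, i ≤ 2 * k →
      (ET he hB (pre f n)).p i = (ET he hB (pre f k)).p i := by
  intro k n hkn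
  induction n with
  | zero => obtain rfl : k = 0 := Nat.le_zero.mp hkn; intro i _; rfl
  | succ n ih =>
    rcases Nat.eq_or_lt_of_le hkn with rfl | h
    · intro i _; rfl
    · have hkn' : k ≤ n := Nat.lt_succ_iff.mp h
      intro i hi
      have h1 : (ET he hB (pre f (n + 1))).p i = (ET he hB (pre f n)).p i := by
        show (ET he hB (f n :: pre f n)).p i = (ET he hB (pre f n)).p i
        exact (Eext_spec he hB (ET he hB (pre f n))).1 (f n) i (by rw [pre_length]; omega)
      rw [h1, ih hkn' i hi]

lemma noEveWin (X : Set (ℕ → Bool)) (hB : Bern X) : ¬ TopEveWins ↥X := by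
  rintro ⟨e, he, hwin⟩
  set U : (ℕ → Bool) → ℕ → Set ↥X := fun f i => (ET he hB (pre f i)).p i with hUdef
  have hUeq : ∀ (f : ℕ → Bool) (j N : ℕ), j ≤ N → U f j = (ET he hB (pre f N)).p j := by
    intro f j N hjN
    exact (ET_consist he hB f hjN j (by omega)).symm
  set S : Scheme := ⟨fun σ => (ET he hB σ).c, fun σ => (ET he hB σ).m,
    fun σ => (ET he hB σ).hm,
    fun σ b => (Eext_spec he hB (ET he hB σ)).2.1 b,
    fun σ => (Eext_spec he hB (ET he hB σ)).2.2⟩ with hSdef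
  have hnot : ∀ f : ℕ → Bool, S.lim f ∉ X := by
    intro f hXf
    have hplay : TopPlay (U f) := by
      refine ⟨fun i => (ET he hB (pre f i)).hopen i, fun i => (ET he hB (pre f i)).hne i, ?_⟩
      intro j
      rw [hUeq f j (j + 1) (Nat.le_succ j)]
      exact (ET he hB (pre f (j + 1))).hmono j (j + 1) (Nat.le_succ j)
    have hfol : TopEveFollows (U f) e := by
      intro k
      have hk : k ≤ (pre f (2 * k)).length := by rw [pre_length]; omega
      have h1 := (ET he hB (pre f (2 * k))).hfol k hk
      have h2 : (fun i : Fin (2 * k) => U f ↑i)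
          = (fun i : Fin (2 * k) => (ET he hB (pre f (2 * k))).p ↑i) := by
        funext i
        exact hUeq f ↑i (2 * k) (by omega)
      show U f (2 * k) = _
      rw [h2]
      exact h1
    set z : ↥X := ⟨S.lim f, hXf⟩ with hzdef
    have hzmem : ∀ n, z ∈ U f (2 * n + 1) := by
      intro n
      have hlen : (pre f (n + 1)).length = n + 1 := pre_length f (n + 1)
      have hbig := (ET he hB (pre f (n + 1))).hbig n (by rw [hlen])
      have hz1 : z ∈ Subtype.val ⁻¹' cylinder (ET he hB (pre f (n + 1))).c
          (ET he hB (pre f (n + 1))).m := S.lim_mem f (n + 1)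
      have hz2 : z ∈ (ET he hB (pre f (n + 1))).p (2 * n + 1) := hbig hz1
      rw [hUeq f (2 * n + 1) (2 * n + 1) le_rfl,
        ET_consist he hB f (by omega : n + 1 ≤ 2 * n + 1) (2 * n + 1) (by omega)]
      exact hz2
    have hzin : z ∈ ⋂ n, U f n := by
      rw [mem_iInter]
      intro j
      have hdec : ∀ a b : ℕ, a ≤ b → U f b ⊆ U f a :=
        fun a b hab => antitone_nat_of_succ_le hplay.2.2 hab
      exact hdec j (2 * j + 1) (by omega) (hzmem j)
    exact hwin (U f) hplay hfol ⟨z, hzin⟩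
  obtain ⟨z, hz1, hz2⟩ := (hB (range S.lim) (range_lim_nonempty S) (range_lim_icm S)
    (range_lim_acc S)).1
  obtain ⟨f, rfl⟩ := hz2
  exact hnot f hz1

end BMProof


/-- If `X` is a Bernstein set in the Cantor space `2^ω`
(i.e. both `X ∩ P` and `P \ X` are nonempty for every nonempty completely
metrizable subset `P ⊆ 2^ω` without isolated points), then the classical
Banach–Mazur game `BM(X)`, played in `X` with the subspace topology, is
undetermined: neither Odd nor Eve has a winning strategy. -/
theorem bm_undetermined_of_bernstein (X : Set (ℕ → Bool))
    (hBernstein : ∀ P : Set (ℕ → Bool), P.Nonempty → IsCompletelyMetrizable ↥P →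
      (∀ x ∈ P, x ∈ closure (P \ {x})) → (X ∩ P).Nonempty ∧ (P \ X).Nonempty) :
    ¬ TopOddWins ↥X ∧ ¬ TopEveWins ↥X := by
  have hB : BMProof.Bern X := hBernstein
  exact ⟨BMProof.noOddWin X hB, BMProof.noEveWin X hB⟩
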